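/- arXiv:1307.6527 — 3 statements merged into one kernel-verified Lean document; each statement's English description precedes it below -/
import Mathlib

section
/- For every commutative ring R, elements x, y ∈ R, and natural number n ≥ 1, the identity (x - y)^n · (x + n·y) = x^(n+1) - ∑_{i=1}^{n} (n + 1 - i) · (x - y)^(n-i) · x^(i-1) · y^2 holds. -/
lemma aux_stmt0 (R : Type*) [CommRing R] (x y : R) (n : ℕ) :
    x ^ (n + 1) - (x - y) ^ n * (x + n • y) =
      ∑ j ∈ Finset.range n, (n - j) • ((x - y) ^ (n - 1 - j) * x ^ j * y ^ 2) := by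
  induction n with
  | zero => simp
  | succ n ih =>
    rw [Finset.sum_range_succ']
    have h1 : ∀ j ∈ Finset.range n,
        ((n + 1) - (j + 1)) • ((x - y) ^ ((n + 1) - 1 - (j + 1)) * x ^ (j + 1) * y ^ 2) =
        x * ((n - j) • ((x - y) ^ (n - 1 - j) * x ^ j * y ^ 2)) := by
      intro j hj
      have e1 : (n + 1) - (j + 1) = n - j := by omega
      have e2 : (n + 1) - 1 - (j + 1) = n - 1 - j := by omega
      rw [e1, e2, mul_smul_comm]
      ring_nf
    rw [Finset.sum_congr rfl h1, ← Finset.mul_sum, ← ih]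
    simp only [Nat.sub_zero, Nat.add_sub_cancel, pow_zero, nsmul_eq_mul]
    push_cast
    ring

theorem stmt_0 (R : Type*) [CommRing R] (x y : R) (n : ℕ) (hn : 1 ≤ n) :
    (x - y) ^ n * (x + n • y) =
      x ^ (n + 1) -
        ∑ i ∈ Finset.Icc 1 n, (n + 1 - i) • ((x - y) ^ (n - i) * x ^ (i - 1) * y ^ 2) := by
  have hr : ∑ i ∈ Finset.Icc 1 n, (n + 1 - i) • ((x - y) ^ (n - i) * x ^ (i - 1) * y ^ 2) =
      ∑ j ∈ Finset.range n, (n - j) • ((x - y) ^ (n - 1 - j) * x ^ j * y ^ 2) := by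
    rw [show Finset.Icc 1 n = Finset.Ico 1 (n+1) by rw [Finset.Ico_add_one_right_eq_Icc], Finset.sum_Ico_eq_sum_range]
    apply Finset.sum_congr (by norm_num)
    intro j hj
    have e1 : n + 1 - (1 + j) = n - j := by omega
    have e2 : n - (1 + j) = n - 1 - j := by omega
    have e3 : 1 + j - 1 = j := by omega
    rw [e1, e2, e3]
  rw [hr]
  linear_combination -aux_stmt0 R x y n
end

section
/- For every integer s with 0 < s < n, the monomial x^s · y^(n+1-s) can be written as an integer linear combination of the polynomials (x - y)^(n-i) · x^(i-1) · y^2 for 1 ≤ i ≤ n. -/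
open MvPolynomial

theorem stmt_2 (n s : ℕ) (hn : 2 ≤ n) (hs0 : 0 < s) (hsn : s < n) :
    ∃ c : Fin n → ℤ,
      ((X 0) ^ s * (X 1) ^ (n + 1 - s) : MvPolynomial (Fin 2) ℤ) =
        ∑ i : Fin n,
          c i • ((X 0 - X 1) ^ (n - 1 - (i : ℕ)) * (X 0) ^ (i : ℕ) * (X 1) ^ 2) := by
  set M := n - 1 - s with hM
  refine ⟨fun i => (-1) ^ (n - 1 - (i : ℕ)) * ((M.choose (n - 1 - (i : ℕ))) : ℤ), ?_⟩
  have key : ∀ i : ℕ, ((-1 : ℤ) ^ (n - 1 - i) * (M.choose (n - 1 - i) : ℤ)) •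
      ((X 0 - X 1 : MvPolynomial (Fin 2) ℤ) ^ (n - 1 - i) * (X 0) ^ i * (X 1) ^ 2)
      = ((-1 : ℤ) ^ (n - 1 - i) * (M.choose (n - 1 - i) : ℤ)) •
      ((X 0 - X 1) ^ (n - 1 - i) * (X 0) ^ i * (X 1) ^ 2) := fun _ => rfl
  rw [Fin.sum_univ_eq_sum_range
    (fun i => ((-1 : ℤ) ^ (n - 1 - i) * ((M.choose (n - 1 - i)) : ℤ)) •
      ((X 0 - X 1 : MvPolynomial (Fin 2) ℤ) ^ (n - 1 - i) * (X 0) ^ i * (X 1) ^ 2))]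
  rw [← Finset.sum_range_reflect]
  -- now the sum index j corresponds to exponent n-1-(n-1-j) = j of (X0 - X1)
  have hstep : ∀ j ∈ Finset.range n,
      ((-1 : ℤ) ^ (n - 1 - (n - 1 - j)) * ((M.choose (n - 1 - (n - 1 - j))) : ℤ)) •
        ((X 0 - X 1 : MvPolynomial (Fin 2) ℤ) ^ (n - 1 - (n - 1 - j)) * (X 0) ^ (n - 1 - j) * (X 1) ^ 2)
      = ((-1 : ℤ) ^ j * ((M.choose j) : ℤ)) •
        ((X 0 - X 1) ^ j * (X 0) ^ (n - 1 - j) * (X 1) ^ 2) := by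
    intro j hj
    rw [Finset.mem_range] at hj
    have : n - 1 - (n - 1 - j) = j := by omega
    rw [this]
  rw [Finset.sum_congr rfl hstep]
  -- truncate the sum to range (M+1)
  have htrunc : ∑ j ∈ Finset.range n, ((-1 : ℤ) ^ j * ((M.choose j) : ℤ)) •
        ((X 0 - X 1 : MvPolynomial (Fin 2) ℤ) ^ j * (X 0) ^ (n - 1 - j) * (X 1) ^ 2)
      = ∑ j ∈ Finset.range (M + 1), ((-1 : ℤ) ^ j * ((M.choose j) : ℤ)) •
        ((X 0 - X 1) ^ j * (X 0) ^ (n - 1 - j) * (X 1) ^ 2) := by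
    symm
    apply Finset.sum_subset
    · intro j hj
      rw [Finset.mem_range] at hj ⊢
      omega
    · intro j _ hj
      rw [Finset.mem_range, not_lt] at hj
      have : M.choose j = 0 := Nat.choose_eq_zero_of_lt (by omega)
      rw [this]
      simp
  rw [htrunc]
  -- expand the LHS
  have h1 : n + 1 - s = M + 2 := by omega
  have h2 : (X 1 : MvPolynomial (Fin 2) ℤ) ^ (M + 2) = (X 0 - (X 0 - X 1)) ^ M * (X 1) ^ 2 := by
    rw [pow_add]
    ring_nf
  rw [h1, h2, sub_pow, Finset.sum_mul, Finset.mul_sum,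
    ← Finset.sum_range_reflect (fun j => ((-1 : ℤ) ^ j * ((M.choose j) : ℤ)) •
        ((X 0 - X 1 : MvPolynomial (Fin 2) ℤ) ^ j * (X 0) ^ (n - 1 - j) * (X 1) ^ 2)) (M + 1)]
  apply Finset.sum_congr rfl
  intro m hm
  rw [Finset.mem_range] at hm
  have hm' : m ≤ M := by omega
  have e1 : M + 1 - 1 - m = M - m := by omega
  have e3 : n - 1 - (M - m) = s + m := by omega
  rw [e1, e3, Nat.choose_symm hm']
  have hsgn : ((-1 : ℤ)) ^ (M - m) * ((M.choose m) : ℤ)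
      = (-1) ^ (m + M) * ((M.choose m) : ℤ) := by
    congr 1
    rw [show m + M = (M - m) + 2 * m by omega, pow_add, pow_mul, neg_one_sq, one_pow, mul_one]
  rw [hsgn, zsmul_eq_mul]
  push_cast
  ring
end

section
/- Let C ⊆ V be an open convex cone in a finite-dimensional real normed vector space V, and let α : C → ℝ be a function satisfying (a) α(t·L) = α(L)/t for all t > 0 and L ∈ C, and (b) α(L) ≤ α(L') whenever L, L' ∈ C and L - L' ∈ C̄ lies in the closure of the cone (antitonicity with respect to the cone order). Suppose α(L) > 0 for all L ∈ C. Then α is continuous on C. -/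
theorem stmt_5 {V : Type*} [NormedAddCommGroup V] [NormedSpace ℝ V]
    [FiniteDimensional ℝ V]
    (C : Set V) (hCopen : IsOpen C) (hCconv : Convex ℝ C)
    (hCcone : ∀ x ∈ C, ∀ t : ℝ, 0 < t → t • x ∈ C)
    (α : V → ℝ)
    (hhom : ∀ L ∈ C, ∀ t : ℝ, 0 < t → α (t • L) = α L / t)
    (hanti : ∀ L ∈ C, ∀ L' ∈ C, L - L' ∈ closure C → α L ≤ α L')
    (hpos : ∀ L ∈ C, 0 < α L) :
    ContinuousOn α C := by
  rw [Metric.continuousOn_iff]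
  intro L hL ε hε
  have hαL := hpos L hL
  -- choose ε'
  set e : ℝ := min (1/2) (ε / (2 * α L + 1)) with he
  have he1 : e ≤ 1/2 := min_le_left _ _
  have he0 : 0 < e := by
    apply lt_min (by norm_num)
    positivity
  have heε : 2 * α L * e < ε := by
    calc 2 * α L * e ≤ 2 * α L * (ε / (2 * α L + 1)) := by
          apply mul_le_mul_of_nonneg_left (min_le_right _ _) (by positivity)
      _ < ε := by
          rw [mul_div_assoc', div_lt_iff₀ (by positivity)]
          nlinarith
  obtain ⟨δ₀, hδ₀, hball⟩ := Metric.isOpen_iff.mp hCopen L hL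
  refine ⟨e * δ₀, by positivity, fun L' hL' hdist => ?_⟩
  -- key: ball (e • L) (e * δ₀) ⊆ C
  have hscale : ∀ x : V, dist x (e • L) < e * δ₀ → x ∈ C := by
    intro x hx
    have : e⁻¹ • x ∈ Metric.ball L δ₀ := by
      rw [Metric.mem_ball, dist_eq_norm] at *
      have : e⁻¹ • x - L = e⁻¹ • (x - e • L) := by
        rw [smul_sub, smul_smul, inv_mul_cancel₀ he0.ne', one_smul]
      rw [this, norm_smul, norm_inv, Real.norm_eq_abs, abs_of_pos he0]
      rw [inv_mul_lt_iff₀ he0]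
      linarith
    have := hCcone _ (hball this) e he0
    rwa [smul_inv_smul₀ he0.ne'] at this
  have h1 : (1 + e) • L - L' ∈ C := by
    apply hscale
    have : (1 + e) • L - L' - e • L = L - L' := by
      rw [add_smul, one_smul]; abel
    rw [dist_eq_norm, this, ← dist_eq_norm]
    rwa [dist_comm]
  have h2 : L' - (1 - e) • L ∈ C := by
    apply hscale
    have : L' - (1 - e) • L - e • L = L' - L := by
      rw [sub_smul, one_smul]; abel
    rw [dist_eq_norm, this, ← dist_eq_norm]
    exact hdist
  have hmem1 : (1 + e) • L ∈ C := hCcone L hL _ (by linarith)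
  have hmem2 : (1 - e) • L ∈ C := hCcone L hL _ (by linarith)
  have hle1 : α L / (1 + e) ≤ α L' := by
    have := hanti _ hmem1 L' hL' (subset_closure h1)
    rwa [hhom L hL _ (by linarith)] at this
  have hle2 : α L' ≤ α L / (1 - e) := by
    have := hanti L' hL' _ hmem2 (subset_closure h2)
    rwa [hhom L hL _ (by linarith)] at this
  rw [Real.dist_eq, abs_lt]
  constructor
  · -- α L - α L' < ε, from α L' ≥ α L / (1+e)
    have hne : (1:ℝ) + e ≠ 0 := by linarith
    have : α L - α L / (1 + e) = α L * e / (1 + e) := by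
      field_simp; ring
    have hb : α L * e / (1 + e) ≤ 2 * α L * e := by
      rw [div_le_iff₀ (by linarith)]
      nlinarith [mul_pos hαL he0]
    linarith
  · have hne : (1:ℝ) - e ≠ 0 := by linarith
    have : α L / (1 - e) - α L = α L * e / (1 - e) := by
      field_simp; ring
    have hb : α L * e / (1 - e) ≤ 2 * α L * e := by
      rw [div_le_iff₀ (by linarith)]
      nlinarith [mul_nonneg (mul_pos hαL he0).le (by linarith : (0:ℝ) ≤ 1 - 2 * e)]
    linarith
end
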